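/- arXiv:2009.12803 — 2 statements merged into one kernel-verified Lean document; each statement's English description precedes it below -/
import Mathlib

section
/- Let p' > p ≥ 2 and q' > q ≥ 2 be integers, and let F : D^I_{q,p} → D^I_{q',p'} be a proper holomorphic map such that for every row vector A ∈ M(1,q;ℂ) and every Z ∈ D^I_{q,p}, one has (A, 0_{1×(q'−q)}) · F(Z) = (A·Z, 0_{1×(p'−p)}), where (A,0) ∈ M(1,q';ℂ) and (AZ,0) ∈ M(1,p';ℂ) denote the row vectors padded with zeros. Then there is a holomorphic map F₂₂ : D^I_{q,p} → D^I_{q'−q, p'−p} such that F(Z) is the block-diagonal matrix [[Z,0],[0,F₂₂(Z)]] for all Z ∈ D^I_{q,p}. -/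
open Matrix
open scoped ComplexOrder

attribute [local instance] Matrix.normedAddCommGroup Matrix.normedSpace

/-- The type-I irreducible bounded symmetric domain `D^I_{m,n}`,
realized as the set of complex `m × n` matrices `Z` with `I - Zᴴ Z` positive definite. -/
def typeIDomain (m n : ℕ) : Set (Matrix (Fin m) (Fin n) ℂ) :=
  {Z | (1 - Zᴴ * Z).PosDef}

/-- `f` maps `D` into `D'` and the `f`-preimage of every compact subset of `D'`
is a compact subset of `D`. -/
def ProperOn {E F : Type*} [TopologicalSpace E] [TopologicalSpace F]
    (f : E → F) (D : Set E) (D' : Set F) : Prop :=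
  Set.MapsTo f D D' ∧ ∀ K : Set F, K ⊆ D' → IsCompact K → IsCompact (D ∩ f ⁻¹' K)

/-- `Φ` is a (biholomorphic) automorphism of the type-I domain `D^I_{m,n}`. -/
def IsAutOf {m n : ℕ} (Φ : Matrix (Fin m) (Fin n) ℂ → Matrix (Fin m) (Fin n) ℂ) : Prop :=
  Set.MapsTo Φ (typeIDomain m n) (typeIDomain m n) ∧
  DifferentiableOn ℂ Φ (typeIDomain m n) ∧
  ∃ Ψ, Set.MapsTo Ψ (typeIDomain m n) (typeIDomain m n) ∧
    DifferentiableOn ℂ Ψ (typeIDomain m n) ∧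
    (∀ Z ∈ typeIDomain m n, Ψ (Φ Z) = Z) ∧
    (∀ Z ∈ typeIDomain m n, Φ (Ψ Z) = Z)

/-- The block-diagonal matrix `[[Z, 0], [0, W]]`, reindexed to size `p' × q'`. -/
def diagBlock {p q a b p' q' : ℕ} (hp : p + a = p') (hq : q + b = q')
    (Z : Matrix (Fin p) (Fin q) ℂ) (W : Matrix (Fin a) (Fin b) ℂ) :
    Matrix (Fin p') (Fin q') ℂ :=
  Matrix.reindex (finCongr hp) (finCongr hq)
    (Matrix.reindex finSumFinEquiv finSumFinEquiv (Matrix.fromBlocks Z 0 0 W))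


/-- Pad a row vector of length `a` with zeros to obtain a row vector of length `b`. -/
def padRow {a : ℕ} (b : ℕ) (v : Fin a → ℂ) : Fin b → ℂ :=
  fun i => if h : (i : ℕ) < a then v ⟨(i : ℕ), h⟩ else 0

namespace Stmt9Aux

noncomputable def sqn {k : ℕ} (x : Fin k → ℂ) : ℝ := ∑ i, Complex.normSq (x i)

lemma sqn_nonneg {k : ℕ} (x : Fin k → ℂ) : 0 ≤ sqn x :=
  Finset.sum_nonneg fun i _ => Complex.normSq_nonneg _

lemma sqn_pos {k : ℕ} {x : Fin k → ℂ} (hx : x ≠ 0) : 0 < sqn x := by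
  obtain ⟨i, hi⟩ := Function.ne_iff.mp hx
  exact Finset.sum_pos' (fun i _ => Complex.normSq_nonneg _)
    ⟨i, Finset.mem_univ i, Complex.normSq_pos.mpr hi⟩

lemma star_dot_self {k : ℕ} (x : Fin k → ℂ) : star x ⬝ᵥ x = (sqn x : ℂ) := by
  simp only [dotProduct, Pi.star_apply, sqn, Complex.ofReal_sum]
  exact Finset.sum_congr rfl fun i _ => (Complex.normSq_eq_conj_mul_self).symm ▸ rfl

lemma sqn_component_le {k : ℕ} (x : Fin k → ℂ) (i : Fin k) :
    Complex.normSq (x i) ≤ sqn x :=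
  Finset.single_le_sum (fun i _ => Complex.normSq_nonneg (x i)) (Finset.mem_univ i)

lemma dot_conj {k : ℕ} (a b : Fin k → ℂ) :
    star b ⬝ᵥ a = (starRingEnd ℂ) (star a ⬝ᵥ b) := by
  simp only [dotProduct, Pi.star_apply, map_sum]
  exact Finset.sum_congr rfl fun i _ => by
    simp only [RingHom.map_mul (starRingEnd ℂ)]
    rw [mul_comm]
    simp [RingHomCompTriple.comp_apply]

lemma sqn_add {k : ℕ} (a b : Fin k → ℂ) :
    sqn (a + b) = sqn a + 2 * (star a ⬝ᵥ b).re + sqn b := by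
  have h : ((sqn (a + b) : ℂ)) = ((sqn a + 2 * (star a ⬝ᵥ b).re + sqn b : ℝ) : ℂ) := by
    rw [← star_dot_self]
    have : star (a + b) ⬝ᵥ (a + b) = star a ⬝ᵥ a + (star a ⬝ᵥ b + star b ⬝ᵥ a) + star b ⬝ᵥ b := by
      simp [star_add, add_dotProduct, dotProduct_add]; ring
    rw [this, star_dot_self, star_dot_self, dot_conj a b, Complex.add_conj]
    push_cast
    ring
  exact_mod_cast h

lemma sqn_smul {k : ℕ} (c : ℂ) (x : Fin k → ℂ) :
    sqn (c • x) = Complex.normSq c * sqn x := by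
  simp [sqn, Complex.normSq_mul, Finset.mul_sum]

lemma qf_identity {a b : ℕ} (M : Matrix (Fin a) (Fin b) ℂ) (y : Fin b → ℂ) :
    star y ⬝ᵥ ((1 - Mᴴ * M) *ᵥ y) = ((sqn y - sqn (M *ᵥ y) : ℝ) : ℂ) := by
  rw [sub_mulVec, one_mulVec, dotProduct_sub, ← mulVec_mulVec, dotProduct_mulVec,
    ← star_mulVec, star_dot_self, star_dot_self]
  push_cast; ring

lemma mem_typeIDomain_iff {a b : ℕ} (Z : Matrix (Fin a) (Fin b) ℂ) :
    Z ∈ typeIDomain a b ↔ ∀ x : Fin b → ℂ, x ≠ 0 → sqn (Z *ᵥ x) < sqn x := by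
  constructor
  · intro hZ x hx
    have := hZ.dotProduct_mulVec_pos hx
    rw [qf_identity] at this
    have := Complex.zero_lt_real.mp this
    linarith
  · intro h
    refine Matrix.PosDef.of_dotProduct_mulVec_pos ?_ fun x hx => ?_
    · simp [Matrix.IsHermitian, conjTranspose_sub, conjTranspose_mul]
    · rw [qf_identity]
      exact Complex.zero_lt_real.mpr (by linarith [h x hx])

end Stmt9Aux

namespace Stmt9Aux

open Metric

lemma continuous_sqn {k : ℕ} : Continuous (fun x : Fin k → ℂ => sqn x) := by
  unfold sqn
  exact continuous_finset_sum _ fun i _ => Complex.continuous_normSq.comp (continuous_apply i)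

lemma isOpen_typeIDomain (a b : ℕ) : IsOpen (typeIDomain a b) := by
  rw [isOpen_iff_forall_mem_open]
  intro Z₀ hZ₀
  rw [mem_typeIDomain_iff] at hZ₀
  set S : Set (Fin b → ℂ) := sphere (0 : Fin b → ℂ) 1 with hS
  have hf : Continuous (fun zp : Matrix (Fin a) (Fin b) ℂ × (Fin b → ℂ) =>
      sqn (zp.1 *ᵥ zp.2) - sqn zp.2) := by
    apply Continuous.sub
    · apply continuous_sqn.comp
      apply continuous_pi
      intro i
      simp only [mulVec, dotProduct]
      exact continuous_finset_sum _ fun j _ =>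
        (((continuous_apply j).comp ((continuous_apply i).comp continuous_fst))).mul
          ((continuous_apply j).comp continuous_snd)
    · exact continuous_sqn.comp continuous_snd
  have hN : IsOpen {zp : Matrix (Fin a) (Fin b) ℂ × (Fin b → ℂ) |
      sqn (zp.1 *ᵥ zp.2) - sqn zp.2 < 0} := isOpen_lt hf continuous_const
  have hsub : ({Z₀} : Set (Matrix (Fin a) (Fin b) ℂ)) ×ˢ S ⊆
      {zp | sqn (zp.1 *ᵥ zp.2) - sqn zp.2 < 0} := by
    rintro ⟨Z, x⟩ ⟨hZ, hx⟩
    simp only [Set.mem_singleton_iff] at hZ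
    subst hZ
    have hx0 : x ≠ 0 := by
      intro h
      rw [hS, mem_sphere_iff_norm] at hx
      simp [h] at hx
    simpa using sub_neg.mpr (hZ₀ x hx0)
  obtain ⟨u, v, hu, hv, hZu, hSv, huv⟩ :=
    generalized_tube_lemma isCompact_singleton (isCompact_sphere (0 : Fin b → ℂ) 1) hN hsub
  refine ⟨u, fun Z hZ => ?_, hu, hZu rfl⟩
  rw [mem_typeIDomain_iff]
  intro x hx
  have hnx : (0:ℝ) < ‖x‖ := norm_pos_iff.mpr hx
  set u₀ : Fin b → ℂ := ((‖x‖ : ℂ))⁻¹ • x with hu₀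
  have hu₀S : u₀ ∈ S := by
    rw [hS, mem_sphere_iff_norm, sub_zero, hu₀, norm_smul]
    simp [norm_inv, hnx.ne']
  have hmem : (Z, u₀) ∈ {zp : Matrix (Fin a) (Fin b) ℂ × (Fin b → ℂ) |
      sqn (zp.1 *ᵥ zp.2) - sqn zp.2 < 0} := huv ⟨hZ, hSv hu₀S⟩
  have hneg : sqn (Z *ᵥ u₀) - sqn u₀ < 0 := hmem
  have hxu : x = (‖x‖ : ℂ) • u₀ := by
    rw [hu₀, smul_smul]
    rw [mul_inv_cancel₀ (by exact_mod_cast hnx.ne')]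
    simp
  have e1 : sqn (Z *ᵥ x) = Complex.normSq ((‖x‖ : ℂ)) * sqn (Z *ᵥ u₀) := by
    conv_lhs => rw [hxu]
    rw [mulVec_smul, sqn_smul]
  have e2 : sqn x = Complex.normSq ((‖x‖ : ℂ)) * sqn u₀ := by
    conv_lhs => rw [hxu]
    rw [sqn_smul]
  have hpos : 0 < Complex.normSq ((‖x‖ : ℂ)) := by
    rw [Complex.normSq_ofReal]; positivity
  nlinarith [hneg, hpos, e1, e2]

lemma diffOn_entry {E : Type*} [NormedAddCommGroup E] [NormedSpace ℂ E]
    {c d : ℕ} {f : E → Matrix (Fin c) (Fin d) ℂ}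
    {s : Set E} (h : DifferentiableOn ℂ f s) (i : Fin c) (j : Fin d) :
    DifferentiableOn ℂ (fun Z => f Z i j) s := by
  have h1 : DifferentiableOn ℂ (fun Z => f Z i) s := differentiableOn_pi.mp h i
  exact differentiableOn_pi.mp h1 j

lemma diffOn_of_entries {E : Type*} [NormedAddCommGroup E] [NormedSpace ℂ E]
    {c d : ℕ} {f : E → Matrix (Fin c) (Fin d) ℂ}
    {s : Set E}
    (h : ∀ (i : Fin c) (j : Fin d), DifferentiableOn ℂ (fun Z => f Z i j) s) :
    DifferentiableOn ℂ f s := by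
  apply differentiableOn_pi.mpr
  intro i
  exact differentiableOn_pi.mpr (h i)

lemma maxmod {g : ℂ → ℂ} (hg : DifferentiableOn ℂ g (ball (0:ℂ) 1))
    (hb : ∀ z ∈ ball (0:ℂ) 1, ‖g z‖ ^ 2 ≤ 1 - ‖z‖ ^ 2) {z : ℂ} (hz : z ∈ ball (0:ℂ) 1) :
    g z = 0 := by
  have key : ∀ r : ℝ, ‖z‖ < r → r < 1 → ‖g z‖ ^ 2 ≤ 1 - r ^ 2 := by
    intro r hr1 hr2
    have hr0 : (0:ℝ) < r := lt_of_le_of_lt (norm_nonneg _) hr1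
    have hsq : 0 ≤ 1 - r ^ 2 := by nlinarith
    have hle : ‖g z‖ ≤ Real.sqrt (1 - r ^ 2) := by
      apply Complex.norm_le_of_forall_mem_frontier_norm_le (isBounded_ball (x := (0:ℂ)) (r := r))
      · constructor
        · exact hg.mono (ball_subset_ball hr2.le)
        · apply hg.continuousOn.mono
          rw [closure_ball (0:ℂ) hr0.ne']
          exact closedBall_subset_ball hr2
      · intro w hw
        rw [frontier_ball (0:ℂ) hr0.ne'] at hw
        have hwn : ‖w‖ = r := by simpa using hw
        have hwb : w ∈ ball (0:ℂ) 1 := by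
          rw [mem_ball_zero_iff, hwn]; exact hr2
        have := hb w hwb
        rw [hwn] at this
        nlinarith [norm_nonneg (g w), Real.sq_sqrt hsq, Real.sqrt_nonneg (1 - r^2)]
      · exact subset_closure (mem_ball_zero_iff.mpr hr1)
    nlinarith [Real.sq_sqrt hsq, norm_nonneg (g z), Real.sqrt_nonneg (1 - r^2)]
  have h0 : ‖g z‖ ^ 2 ≤ 0 := by
    have htend : Filter.Tendsto (fun r : ℝ => 1 - r ^ 2) (nhdsWithin 1 (Set.Iio 1)) (nhds 0) := by
      have : Filter.Tendsto (fun r : ℝ => 1 - r ^ 2) (nhds 1) (nhds (1 - 1 ^ 2)) := by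
        exact ((continuous_const.sub (continuous_pow 2)).tendsto 1)
      simpa using this.mono_left nhdsWithin_le_nhds
    apply ge_of_tendsto htend
    have hball : ‖z‖ < 1 := mem_ball_zero_iff.mp hz
    filter_upwards [Ioo_mem_nhdsLT_of_mem (Set.mem_Ioc.mpr ⟨hball, le_refl 1⟩)] with r hr
    exact key r hr.1 hr.2
  have : ‖g z‖ = 0 := by nlinarith [norm_nonneg (g z)]
  simpa using this

end Stmt9Aux

namespace Stmt9Aux

open Metric

lemma disc_step {q p m : ℕ}
    {C : Matrix (Fin q) (Fin p) ℂ → Matrix (Fin m) (Fin p) ℂ}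
    (hC : DifferentiableOn ℂ C (typeIDomain q p))
    (hbound : ∀ Z ∈ typeIDomain q p, ∀ x : Fin p → ℂ,
      sqn (C Z *ᵥ x) ≤ sqn x - sqn (Z *ᵥ x))
    {Z₀ : Matrix (Fin q) (Fin p) ℂ} (hZ₀ : Z₀ ∈ typeIDomain q p)
    {v : Fin p → ℂ} (hv : sqn v = 1)
    {σ : ℝ} (hσ0 : 0 < σ) (hσ1 : σ < 1)
    (heig : (Z₀ᴴ * Z₀) *ᵥ v = ((σ ^ 2 : ℝ) : ℂ) • v) :
    C Z₀ *ᵥ v = 0 := by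
  have hσc : ((σ : ℂ)) ≠ 0 := by exact_mod_cast hσ0.ne'
  have hvA : ∀ x : Fin p → ℂ,
      star (Z₀ *ᵥ v) ⬝ᵥ (Z₀ *ᵥ x) = ((σ ^ 2 : ℝ) : ℂ) * (star v ⬝ᵥ x) := by
    intro x
    have hA : (Z₀ᴴ * Z₀).IsHermitian := isHermitian_conjTranspose_mul_self Z₀
    have hsv : star v ᵥ* (Z₀ᴴ * Z₀) = ((σ ^ 2 : ℝ) : ℂ) • star v := by
      have h1 : star ((Z₀ᴴ * Z₀) *ᵥ v) = star v ᵥ* (Z₀ᴴ * Z₀) := by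
        rw [star_mulVec, hA.eq]
      rw [← h1, heig, star_smul]
      simp
    calc star (Z₀ *ᵥ v) ⬝ᵥ (Z₀ *ᵥ x)
        = star v ⬝ᵥ ((Z₀ᴴ * Z₀) *ᵥ x) := by
          rw [star_mulVec, ← dotProduct_mulVec, mulVec_mulVec]
      _ = (star v ᵥ* (Z₀ᴴ * Z₀)) ⬝ᵥ x := by rw [dotProduct_mulVec]
      _ = ((σ ^ 2 : ℝ) : ℂ) * (star v ⬝ᵥ x) := by rw [hsv, smul_dotProduct]; simp
  have hsqnZv : sqn (Z₀ *ᵥ v) = σ ^ 2 := by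
    have h := hvA v
    rw [star_dot_self, star_dot_self, hv] at h
    have h2 : ((sqn (Z₀ *ᵥ v) : ℂ)) = ((σ ^ 2 : ℝ) : ℂ) := by simpa using h
    exact_mod_cast h2
  set w : Fin q → ℂ := ((σ : ℂ))⁻¹ • (Z₀ *ᵥ v) with hw
  have hZv : Z₀ *ᵥ v = ((σ : ℂ)) • w := by
    rw [hw, smul_inv_smul₀ hσc]
  have hsqnw : sqn w = 1 := by
    rw [hw, sqn_smul, hsqnZv, Complex.normSq_inv, Complex.normSq_ofReal]
    field_simp
  have hZxw : ∀ x : Fin p → ℂ,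
      star (Z₀ *ᵥ x) ⬝ᵥ w = ((σ : ℂ)) * (starRingEnd ℂ) (star v ⬝ᵥ x) := by
    intro x
    rw [hw, dotProduct_smul, smul_eq_mul]
    have h2 : star (Z₀ *ᵥ x) ⬝ᵥ (Z₀ *ᵥ v) = (starRingEnd ℂ) (star (Z₀ *ᵥ v) ⬝ᵥ (Z₀ *ᵥ x)) :=
      dot_conj _ _
    rw [h2, hvA x, RingHom.map_mul, Complex.conj_ofReal]
    have hσc2 : ((σ : ℂ)) * ((σ : ℂ)) ≠ 0 := mul_ne_zero hσc hσc
    field_simp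
    push_cast
    ring
  set N : Matrix (Fin q) (Fin p) ℂ := Matrix.of (fun i j => w i * (starRingEnd ℂ) (v j)) with hN
  set Zf : ℂ → Matrix (Fin q) (Fin p) ℂ := fun lam => Z₀ + (lam - (σ : ℂ)) • N with hZf
  have hNx : ∀ x : Fin p → ℂ, N *ᵥ x = (star v ⬝ᵥ x) • w := by
    intro x
    funext i
    simp only [hN, mulVec, dotProduct, Matrix.of_apply, Pi.smul_apply, smul_eq_mul,
      Pi.star_apply, Complex.star_def, Finset.sum_mul]
    exact Finset.sum_congr rfl fun j _ => by ring
  have hZfx : ∀ (lam : ℂ) (x : Fin p → ℂ),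
      Zf lam *ᵥ x = Z₀ *ᵥ x + ((lam - (σ:ℂ)) * (star v ⬝ᵥ x)) • w := by
    intro lam x
    rw [hZf]
    simp only
    rw [add_mulVec, smul_mulVec, hNx, smul_smul]
  have hsqnZfx : ∀ (lam : ℂ) (x : Fin p → ℂ),
      sqn (Zf lam *ᵥ x) = sqn (Z₀ *ᵥ x)
        + (Complex.normSq lam - σ^2) * Complex.normSq (star v ⬝ᵥ x) := by
    intro lam x
    rw [hZfx, sqn_add, sqn_smul, hsqnw, mul_one]
    have hdot : star (Z₀ *ᵥ x) ⬝ᵥ (((lam - (σ:ℂ)) * (star v ⬝ᵥ x)) • w)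
        = ((σ * Complex.normSq (star v ⬝ᵥ x) : ℝ) : ℂ) * (lam - (σ:ℂ)) := by
      rw [dotProduct_smul, hZxw x, smul_eq_mul]
      have hmc : (star v ⬝ᵥ x) * (starRingEnd ℂ) (star v ⬝ᵥ x)
          = ((Complex.normSq (star v ⬝ᵥ x) : ℝ) : ℂ) := Complex.mul_conj _
      calc (lam - (σ:ℂ)) * (star v ⬝ᵥ x) * ((σ:ℂ) * (starRingEnd ℂ) (star v ⬝ᵥ x))
          = (σ:ℂ) * ((star v ⬝ᵥ x) * (starRingEnd ℂ) (star v ⬝ᵥ x)) * (lam - (σ:ℂ)) := by ring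
        _ = ((σ * Complex.normSq (star v ⬝ᵥ x) : ℝ) : ℂ) * (lam - (σ:ℂ)) := by
            rw [hmc]; push_cast; ring
    rw [hdot, Complex.normSq_mul]
    have h1 : (((σ * Complex.normSq (star v ⬝ᵥ x) : ℝ) : ℂ) * (lam - (σ:ℂ))).re
        = (σ * Complex.normSq (star v ⬝ᵥ x)) * (lam.re - σ) := by
      simp [Complex.mul_re, Complex.sub_re, Complex.sub_im]
    have h2 : Complex.normSq (lam - (σ:ℂ)) = (lam.re - σ)^2 + lam.im^2 := by
      simp [Complex.normSq_apply, Complex.sub_re, Complex.sub_im]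
      ring
    have h3 : Complex.normSq lam = lam.re^2 + lam.im^2 := by
      simp [Complex.normSq_apply]
      ring
    rw [h1, h2, h3]
    ring
  have hD := (mem_typeIDomain_iff Z₀).mp hZ₀
  have hmargin : ∀ x : Fin p → ℂ,
      (1 - σ^2) * Complex.normSq (star v ⬝ᵥ x) ≤ sqn x - sqn (Z₀ *ᵥ x) := by
    intro x
    set c₀ := star v ⬝ᵥ x with hc₀
    set y := x + (-c₀) • v with hy
    have hy1 : sqn y = sqn x - Complex.normSq c₀ := by
      rw [hy, sqn_add, sqn_smul, hv, mul_one]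
      have hx_v : star x ⬝ᵥ ((-c₀) • v) = -((Complex.normSq c₀ : ℝ) : ℂ) := by
        rw [dotProduct_smul, smul_eq_mul]
        have := dot_conj v x
        rw [this, hc₀]
        calc -c₀ * (starRingEnd ℂ) c₀ = -(c₀ * (starRingEnd ℂ) c₀) := by ring
          _ = -((Complex.normSq c₀ : ℝ) : ℂ) := by rw [Complex.mul_conj]
      rw [hx_v]
      simp [Complex.normSq_neg]
      ring
    have hy2 : sqn (Z₀ *ᵥ y) = sqn (Z₀ *ᵥ x) - σ^2 * Complex.normSq c₀ := by
      have : Z₀ *ᵥ y = Z₀ *ᵥ x + ((-c₀) * (σ:ℂ)) • w := by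
        rw [hy, mulVec_add, mulVec_smul, hZv, smul_smul]
      rw [this, sqn_add, sqn_smul, hsqnw, mul_one]
      have hdot2 : star (Z₀ *ᵥ x) ⬝ᵥ (((-c₀) * (σ:ℂ)) • w)
          = -(((σ^2 * Complex.normSq c₀ : ℝ)) : ℂ) := by
        rw [dotProduct_smul, hZxw x, smul_eq_mul, ← hc₀]
        calc -c₀ * (σ:ℂ) * ((σ:ℂ) * (starRingEnd ℂ) c₀)
            = -((σ:ℂ) * (σ:ℂ) * (c₀ * (starRingEnd ℂ) c₀)) := by ring
          _ = -(((σ^2 * Complex.normSq c₀ : ℝ)) : ℂ) := by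
              rw [Complex.mul_conj]; push_cast; ring
      rw [hdot2, Complex.normSq_mul, Complex.normSq_neg, Complex.normSq_ofReal]
      have hre : (-(((σ^2 * Complex.normSq c₀ : ℝ)) : ℂ)).re = -(σ^2 * Complex.normSq c₀) := by
        rw [Complex.neg_re, Complex.ofReal_re]
      rw [hre]
      ring
    have hineq : sqn (Z₀ *ᵥ y) ≤ sqn y := by
      by_cases hy0 : y = 0
      · rw [hy0]
        simp [sqn]
      · exact (hD y hy0).le
    rw [hy1, hy2] at hineq
    linarith
  have hmem : ∀ lam : ℂ, Complex.normSq lam < 1 → Zf lam ∈ typeIDomain q p := by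
    intro lam hlam
    rw [mem_typeIDomain_iff]
    intro x hx
    rw [hsqnZfx]
    have h1 := hmargin x
    have h2 := hD x hx
    have h3 : 0 ≤ Complex.normSq (star v ⬝ᵥ x) := Complex.normSq_nonneg _
    rcases h3.eq_or_lt with h | h
    · rw [← h]
      simpa using h2
    · nlinarith
  have hvdot : star v ⬝ᵥ v = (1 : ℂ) := by
    rw [star_dot_self, hv]
    simp
  have hsqnZfv : ∀ lam : ℂ, sqn (Zf lam *ᵥ v) = Complex.normSq lam := by
    intro lam
    rw [hsqnZfx lam v, hsqnZv, hvdot]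
    simp
  have hcb : ∀ lam : ℂ, Complex.normSq lam < 1 → sqn (C (Zf lam) *ᵥ v) ≤ 1 - Complex.normSq lam := by
    intro lam h
    have := hbound _ (hmem lam h) v
    rw [hsqnZfv, hv] at this
    exact this
  have hZfdiff : Differentiable ℂ Zf := by
    apply Differentiable.add (differentiable_const _)
    fun_prop
  have hnormSq_norm : ∀ z : ℂ, Complex.normSq z = ‖z‖^2 := by
    intro z
    rw [Complex.normSq_eq_norm_sq]
  have hmaps : Set.MapsTo Zf (ball (0:ℂ) 1) (typeIDomain q p) := by
    intro lam hlam
    rw [mem_ball_zero_iff] at hlam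
    apply hmem
    rw [hnormSq_norm]
    nlinarith [norm_nonneg lam]
  have hgz : ∀ i : Fin m, ∀ lam ∈ ball (0:ℂ) 1, (C (Zf lam) *ᵥ v) i = 0 := by
    intro i lam hlam
    have hCZf : DifferentiableOn ℂ (fun lam => C (Zf lam)) (ball (0:ℂ) 1) :=
      hC.comp hZfdiff.differentiableOn hmaps
    have hgdiff : DifferentiableOn ℂ (fun lam => (C (Zf lam) *ᵥ v) i) (ball (0:ℂ) 1) := by
      have : DifferentiableOn ℂ (fun lam => ∑ l, C (Zf lam) i l * v l) (ball (0:ℂ) 1) :=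
        DifferentiableOn.fun_sum (fun l _ => (diffOn_entry hCZf i l).mul (differentiableOn_const _))
      exact this
    apply maxmod hgdiff _ hlam
    intro z hz
    rw [mem_ball_zero_iff] at hz
    have hz1 : Complex.normSq z < 1 := by
      rw [hnormSq_norm]
      nlinarith [norm_nonneg z]
    have h1 := hcb z hz1
    have h2 := sqn_component_le (C (Zf z) *ᵥ v) i
    have h3 : ‖(C (Zf z) *ᵥ v) i‖^2 = Complex.normSq ((C (Zf z) *ᵥ v) i) :=
      (hnormSq_norm _).symm
    rw [h3, ← hnormSq_norm]
    linarith
  funext i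
  have hσball : ((σ:ℂ)) ∈ ball (0:ℂ) 1 := by
    rw [mem_ball_zero_iff]
    have : ‖((σ:ℂ))‖ = |σ| := Complex.norm_real σ
    rw [this, abs_of_pos hσ0]
    exact hσ1
  have h := hgz i (σ:ℂ) hσball
  have hZfσ : Zf (σ:ℂ) = Z₀ := by
    rw [hZf]
    simp
  rw [hZfσ] at h
  simpa using h

end Stmt9Aux

namespace Stmt9Aux

open Metric

lemma czh_step {q p m : ℕ}
    {C : Matrix (Fin q) (Fin p) ℂ → Matrix (Fin m) (Fin p) ℂ}
    (hC : DifferentiableOn ℂ C (typeIDomain q p))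
    (hbound : ∀ Z ∈ typeIDomain q p, ∀ x : Fin p → ℂ,
      sqn (C Z *ᵥ x) ≤ sqn x - sqn (Z *ᵥ x))
    {Z : Matrix (Fin q) (Fin p) ℂ} (hZ : Z ∈ typeIDomain q p) :
    C Z * Zᴴ = 0 := by
  have hA : (Zᴴ * Z).IsHermitian := isHermitian_conjTranspose_mul_self Z
  have hD := (mem_typeIDomain_iff Z).mp hZ
  set v : Fin p → Fin p → ℂ := fun j => ⇑(hA.eigenvectorBasis j) with hvdef
  set μ : Fin p → ℝ := hA.eigenvalues with hμdef
  have heig : ∀ j, (Zᴴ * Z) *ᵥ v j = ((μ j : ℝ) : ℂ) • v j := by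
    intro j
    have h := hA.mulVec_eigenvectorBasis j
    rw [hvdef, hμdef]
    rw [h]
    funext i
    simp [Pi.smul_apply, Complex.real_smul]
  have hunit : ∀ j, sqn (v j) = 1 := by
    intro j
    have hn : ‖hA.eigenvectorBasis j‖ = 1 := hA.eigenvectorBasis.orthonormal.1 j
    have he : ‖hA.eigenvectorBasis j‖ = Real.sqrt (∑ i, ‖hA.eigenvectorBasis j i‖ ^ 2) :=
      EuclideanSpace.norm_eq _
    have hnn : 0 ≤ ∑ i, ‖hA.eigenvectorBasis j i‖ ^ 2 :=
      Finset.sum_nonneg fun i _ => sq_nonneg _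
    have hsum : ∑ i, ‖hA.eigenvectorBasis j i‖ ^ 2 = 1 := by
      rw [he] at hn
      nlinarith [Real.sq_sqrt hnn]
    rw [← hsum]
    unfold sqn
    apply Finset.sum_congr rfl
    intro i _
    rw [← Complex.sq_norm]
  have hvne : ∀ j, v j ≠ 0 := by
    intro j h
    have := hunit j
    rw [h] at this
    simp [sqn] at this
  have hsqnZv : ∀ j, sqn (Z *ᵥ v j) = μ j := by
    intro j
    have h : ((sqn (Z *ᵥ v j) : ℝ) : ℂ) = ((μ j : ℝ) : ℂ) := by
      rw [← star_dot_self, star_mulVec, ← dotProduct_mulVec, mulVec_mulVec, heig j,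
        dotProduct_smul, smul_eq_mul, star_dot_self, hunit j]
      simp
    exact_mod_cast h
  have hμ0 : ∀ j, 0 ≤ μ j := fun j =>
    (posSemidef_conjTranspose_mul_self Z).eigenvalues_nonneg j
  have hμ1 : ∀ j, μ j < 1 := by
    intro j
    have := hD (v j) (hvne j)
    rw [hsqnZv j, hunit j] at this
    exact this
  have hkey : ∀ j, μ j ≠ 0 → C Z *ᵥ v j = 0 := by
    intro j hj
    have hpos : 0 < μ j := lt_of_le_of_ne (hμ0 j) (Ne.symm hj)
    have hs0 : 0 < Real.sqrt (μ j) := Real.sqrt_pos.mpr hpos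
    have hs1 : Real.sqrt (μ j) < 1 := by
      rw [show (1:ℝ) = Real.sqrt 1 by simp]
      exact Real.sqrt_lt_sqrt (hμ0 j) (hμ1 j)
    apply disc_step hC hbound hZ (hunit j) hs0 hs1
    rw [Real.sq_sqrt (hμ0 j)]
    exact heig j
  -- spectral theorem assembly
  set U : Matrix (Fin p) (Fin p) ℂ :=
    ((Matrix.IsHermitian.eigenvectorUnitary hA : Matrix.unitaryGroup (Fin p) ℂ) :
      Matrix (Fin p) (Fin p) ℂ) with hU
  have hspec : Zᴴ * Z = U * Matrix.diagonal (RCLike.ofReal ∘ μ) * star U :=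
    hA.spectral_theorem
  set B : Matrix (Fin m) (Fin p) ℂ := C Z * U with hB
  have hBcol : ∀ (i : Fin m) (j : Fin p), B i j = (C Z *ᵥ v j) i := by
    intro i j
    rw [hB, Matrix.mul_apply]
    simp only [mulVec, dotProduct]
    apply Finset.sum_congr rfl
    intro k _
    congr 1
  have hmid : B * Matrix.diagonal ((RCLike.ofReal ∘ μ) : Fin p → ℂ) * Bᴴ = 0 := by
    ext i i'
    rw [Matrix.mul_apply]
    apply Finset.sum_eq_zero
    intro k _
    rw [Matrix.mul_diagonal]
    by_cases hk : μ k = 0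
    · simp [Function.comp, hk]
    · have h := hkey k hk
      have hB0 : B i k = 0 := by
        rw [hBcol, h]
        rfl
      simp [hB0]
  have hfinal : (C Z * Zᴴ) * (C Z * Zᴴ)ᴴ = 0 := by
    have h1 : (C Z * Zᴴ) * (C Z * Zᴴ)ᴴ = C Z * (Zᴴ * Z) * (C Z)ᴴ := by
      rw [conjTranspose_mul, conjTranspose_conjTranspose]
      simp only [Matrix.mul_assoc]
    rw [h1, hspec]
    have h2 : C Z * (U * Matrix.diagonal (RCLike.ofReal ∘ μ) * star U) * (C Z)ᴴ
        = B * Matrix.diagonal ((RCLike.ofReal ∘ μ) : Fin p → ℂ) * Bᴴ := by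
      rw [hB, conjTranspose_mul, star_eq_conjTranspose]
      simp only [Matrix.mul_assoc]
    rw [h2, hmid]
  exact Matrix.self_mul_conjTranspose_eq_zero.mp hfinal

end Stmt9Aux

namespace Stmt9Aux

open Metric Filter

lemma core {q p m : ℕ} (hq : 0 < q)
    {C : Matrix (Fin q) (Fin p) ℂ → Matrix (Fin m) (Fin p) ℂ}
    (hC : DifferentiableOn ℂ C (typeIDomain q p))
    (hbound : ∀ Z ∈ typeIDomain q p, ∀ x : Fin p → ℂ,
      sqn (C Z *ᵥ x) ≤ sqn x - sqn (Z *ᵥ x))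
    {Z₀ : Matrix (Fin q) (Fin p) ℂ} (hZ₀ : Z₀ ∈ typeIDomain q p) :
    C Z₀ = 0 := by
  obtain ⟨ε, hε, hball⟩ := Metric.isOpen_iff.mp (isOpen_typeIDomain q p) Z₀ hZ₀
  ext i k
  set j : Fin q := ⟨0, hq⟩ with hj
  set E : Matrix (Fin q) (Fin p) ℂ := Matrix.single j k 1 with hE
  set Zt : ℂ → Matrix (Fin q) (Fin p) ℂ := fun t => Z₀ + t • E with hZt
  set δ : ℝ := ε / (‖E‖ + 1) with hδ
  have hδpos : 0 < δ := div_pos hε (by positivity)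
  have hmem : ∀ t ∈ ball (0:ℂ) δ, Zt t ∈ typeIDomain q p := by
    intro t ht
    apply hball
    rw [mem_ball, dist_eq_norm]
    have h1 : Zt t - Z₀ = t • E := by rw [hZt]; simp
    rw [h1, norm_smul]
    rw [mem_ball_zero_iff] at ht
    have h2 : δ * (‖E‖ + 1) = ε := by
      rw [hδ]; field_simp
    nlinarith [norm_nonneg E, norm_nonneg t, ht]
  set g : ℂ → ℂ := fun t => C (Zt t) i k with hg
  set φ : ℂ → ℂ := fun t => ∑ l, C (Zt t) i l * (starRingEnd ℂ) (Z₀ j l) with hφ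
  have hid : ∀ t ∈ ball (0:ℂ) δ, φ t + (starRingEnd ℂ) t * g t = 0 := by
    intro t ht
    have h0 := czh_step hC hbound (hmem t ht)
    have h1 := congrFun (congrFun h0 i) j
    rw [Matrix.mul_apply] at h1
    have hconj : ∀ l, (Zt t)ᴴ l j
        = (starRingEnd ℂ) (Z₀ j l) + (starRingEnd ℂ) t * (if l = k then 1 else 0) := by
      intro l
      rw [hZt]
      simp only [conjTranspose_apply, Matrix.add_apply, Matrix.smul_apply, smul_eq_mul,
        star_add, star_mul', hE, Matrix.single]
      by_cases hl : l = k
      · simp [hl, Matrix.of_apply, Complex.star_def]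
      · simp only [Matrix.of_apply]
        rw [if_neg (fun h => hl h.2.symm)]
        rw [if_neg hl]
        simp
    have h2 : ∑ l, C (Zt t) i l * (Zt t)ᴴ l j = φ t + (starRingEnd ℂ) t * g t := by
      rw [hφ, hg]
      simp only
      rw [Finset.sum_congr rfl (fun l _ => by rw [hconj l])]
      rw [show (fun l => C (Zt t) i l * ((starRingEnd ℂ) (Z₀ j l)
          + (starRingEnd ℂ) t * (if l = k then 1 else 0))) = fun l =>
          (C (Zt t) i l * (starRingEnd ℂ) (Z₀ j l)
          + (starRingEnd ℂ) t * (C (Zt t) i l * (if l = k then 1 else 0))) from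
        funext fun l => by ring]
      rw [Finset.sum_add_distrib, ← Finset.mul_sum]
      congr 1
      congr 1
      simp [Finset.sum_ite_eq', mul_ite]
    rw [← h2, h1]
    simp
  have hZtdiff : Differentiable ℂ Zt := by
    apply Differentiable.add (differentiable_const _)
    fun_prop
  have hCcomp : DifferentiableOn ℂ (fun t => C (Zt t)) (ball (0:ℂ) δ) :=
    hC.comp hZtdiff.differentiableOn hmem
  have hφdiff : DifferentiableOn ℂ φ (ball (0:ℂ) δ) :=
    DifferentiableOn.fun_sum fun l _ => (diffOn_entry hCcomp i l).mul (differentiableOn_const _)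
  have hgdiff : DifferentiableOn ℂ g (ball (0:ℂ) δ) := diffOn_entry hCcomp i k
  have h0mem : (0:ℂ) ∈ ball (0:ℂ) δ := mem_ball_self hδpos
  have hnhds : ball (0:ℂ) δ ∈ nhds (0:ℂ) := isOpen_ball.mem_nhds h0mem
  have hφat : DifferentiableAt ℂ φ 0 := hφdiff.differentiableAt hnhds
  have hgc : ContinuousAt g 0 := ((hgdiff.differentiableAt hnhds).continuousAt)
  have hφ0 : φ 0 = 0 := by
    have := hid 0 h0mem
    simpa using this
  set d : ℂ := deriv φ 0 with hd
  have hder : HasDerivAt φ d 0 := hφat.hasDerivAt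
  have hslope : Tendsto (fun t => φ t / t) (nhdsWithin 0 {(0:ℂ)}ᶜ) (nhds d) := by
    have h := hasDerivAt_iff_tendsto_slope.mp hder
    apply h.congr'
    filter_upwards [self_mem_nhdsWithin] with t ht
    rw [slope_def_field, hφ0]
    simp
  -- real axis
  have hrt : Tendsto (fun s : ℝ => (s : ℂ)) (nhdsWithin 0 {(0:ℝ)}ᶜ)
      (nhdsWithin 0 {(0:ℂ)}ᶜ) := by
    rw [tendsto_nhdsWithin_iff]
    constructor
    · have := (Complex.continuous_ofReal.tendsto 0).mono_left
        (nhdsWithin_le_nhds (s := {(0:ℝ)}ᶜ))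
      simpa using this
    · filter_upwards [self_mem_nhdsWithin] with s hs
      simp only [Set.mem_compl_iff, Set.mem_singleton_iff] at hs ⊢
      exact_mod_cast hs
  have hgr : Tendsto (fun s : ℝ => g ((s:ℂ))) (nhdsWithin 0 {(0:ℝ)}ᶜ) (nhds (g 0)) := by
    have h1 : Tendsto (fun s : ℝ => (s:ℂ)) (nhds 0) (nhds (0:ℂ)) := by
      simpa using Complex.continuous_ofReal.tendsto 0
    exact (hgc.tendsto.comp h1).mono_left nhdsWithin_le_nhds
  have heq1 : d = -(g 0) := by
    have lim1 : Tendsto (fun s : ℝ => φ ((s:ℂ)) / ((s:ℂ))) (nhdsWithin 0 {(0:ℝ)}ᶜ)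
        (nhds d) := hslope.comp hrt
    have lim2 : Tendsto (fun s : ℝ => φ ((s:ℂ)) / ((s:ℂ))) (nhdsWithin 0 {(0:ℝ)}ᶜ)
        (nhds (-(g 0))) := by
      apply Tendsto.congr' _ hgr.neg
      have hb : Set.Ioo (-δ) δ ∩ {(0:ℝ)}ᶜ ∈ nhdsWithin 0 {(0:ℝ)}ᶜ :=
        Filter.inter_mem (mem_nhdsWithin_of_mem_nhds (Ioo_mem_nhds (by linarith) hδpos))
          self_mem_nhdsWithin
      filter_upwards [hb] with s hs
      obtain ⟨hs1, hs2⟩ := hs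
      have hsne : (s:ℂ) ≠ 0 := by
        simp only [Set.mem_compl_iff, Set.mem_singleton_iff] at hs2
        exact_mod_cast hs2
      have hsball : ((s:ℂ)) ∈ ball (0:ℂ) δ := by
        rw [mem_ball_zero_iff]
        rw [Complex.norm_real]
        rw [Real.norm_eq_abs, abs_lt]
        exact ⟨hs1.1, hs1.2⟩
      have := hid _ hsball
      have hconjs : (starRingEnd ℂ) ((s:ℂ)) = ((s:ℂ)) := Complex.conj_ofReal s
      rw [hconjs] at this
      have hφs : φ ((s:ℂ)) = -((s:ℂ)) * g ((s:ℂ)) := by linear_combination this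
      rw [hφs, neg_mul, neg_div, mul_div_cancel_left₀ _ hsne]
    exact tendsto_nhds_unique lim2 lim1 |>.symm
  -- imaginary axis
  have hit : Tendsto (fun s : ℝ => ((s : ℂ) * Complex.I)) (nhdsWithin 0 {(0:ℝ)}ᶜ)
      (nhdsWithin 0 {(0:ℂ)}ᶜ) := by
    rw [tendsto_nhdsWithin_iff]
    constructor
    · have hcont : Continuous (fun s : ℝ => (s:ℂ) * Complex.I) :=
        Complex.continuous_ofReal.mul continuous_const
      have := (hcont.tendsto 0).mono_left (nhdsWithin_le_nhds (s := {(0:ℝ)}ᶜ))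
      simpa using this
    · filter_upwards [self_mem_nhdsWithin] with s hs
      simp only [Set.mem_compl_iff, Set.mem_singleton_iff] at hs ⊢
      intro h
      rcases mul_eq_zero.mp h with h1 | h2
      · exact hs (by exact_mod_cast h1)
      · exact Complex.I_ne_zero h2
  have hgi : Tendsto (fun s : ℝ => g ((s:ℂ) * Complex.I)) (nhdsWithin 0 {(0:ℝ)}ᶜ)
      (nhds (g 0)) := by
    have h1 : Tendsto (fun s : ℝ => (s:ℂ) * Complex.I) (nhds 0) (nhds (0:ℂ)) := by
      have hcont : Continuous (fun s : ℝ => (s:ℂ) * Complex.I) :=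
        Complex.continuous_ofReal.mul continuous_const
      have := hcont.tendsto (0:ℝ)
      simpa using this
    exact (hgc.tendsto.comp h1).mono_left nhdsWithin_le_nhds
  have heq2 : d = g 0 := by
    have lim1 : Tendsto (fun s : ℝ => φ ((s:ℂ) * Complex.I) / ((s:ℂ) * Complex.I))
        (nhdsWithin 0 {(0:ℝ)}ᶜ) (nhds d) := hslope.comp hit
    have lim2 : Tendsto (fun s : ℝ => φ ((s:ℂ) * Complex.I) / ((s:ℂ) * Complex.I))
        (nhdsWithin 0 {(0:ℝ)}ᶜ) (nhds (g 0)) := by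
      apply Tendsto.congr' _ hgi
      have hb : Set.Ioo (-δ) δ ∩ {(0:ℝ)}ᶜ ∈ nhdsWithin 0 {(0:ℝ)}ᶜ :=
        Filter.inter_mem (mem_nhdsWithin_of_mem_nhds (Ioo_mem_nhds (by linarith) hδpos))
          self_mem_nhdsWithin
      filter_upwards [hb] with s hs
      obtain ⟨hs1, hs2⟩ := hs
      have hsne : (s:ℂ) * Complex.I ≠ 0 := by
        apply mul_ne_zero
        · simp only [Set.mem_compl_iff, Set.mem_singleton_iff] at hs2
          exact_mod_cast hs2
        · exact Complex.I_ne_zero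
      have hsball : ((s:ℂ) * Complex.I) ∈ ball (0:ℂ) δ := by
        rw [mem_ball_zero_iff, norm_mul, Complex.norm_I, mul_one, Complex.norm_real,
          Real.norm_eq_abs, abs_lt]
        exact ⟨hs1.1, hs1.2⟩
      have := hid _ hsball
      have hconjs : (starRingEnd ℂ) ((s:ℂ) * Complex.I) = -((s:ℂ) * Complex.I) := by
        rw [RingHom.map_mul, Complex.conj_ofReal, Complex.conj_I]
        ring
      rw [hconjs] at this
      have hφs : φ ((s:ℂ) * Complex.I) = ((s:ℂ) * Complex.I) * g ((s:ℂ) * Complex.I) := by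
        linear_combination this
      rw [hφs, mul_div_cancel_left₀ _ hsne]
    exact tendsto_nhds_unique lim2 lim1 |>.symm
  have hg0 : g 0 = 0 := by
    have : -(g 0) = g 0 := heq1 ▸ heq2
    have h2 : (2:ℂ) * g 0 = 0 := by linear_combination -this
    have := mul_eq_zero.mp h2
    rcases this with h | h
    · norm_num at h
    · exact h
  have hZt0 : Zt 0 = Z₀ := by rw [hZt]; simp
  have : C Z₀ i k = 0 := by
    rw [← hZt0]
    exact hg0
  simpa using this

end Stmt9Aux

namespace Stmt9Aux

lemma sum_split' {a b c : ℕ} (h : a + b = c) (e1 : Fin a → Fin c) (e2 : Fin b → Fin c)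
    (he1 : ∀ j, ((e1 j) : ℕ) = j.1) (he2 : ∀ j, ((e2 j) : ℕ) = a + j.1)
    {M : Type*} [AddCommMonoid M] (f : Fin c → M) :
    ∑ j, f j = (∑ j : Fin a, f (e1 j)) + ∑ j : Fin b, f (e2 j) := by
  subst h
  rw [Fin.sum_univ_add]
  congr 1
  · exact Finset.sum_congr rfl fun j _ => congrArg f (Fin.ext (by simp [he1 j]))
  · exact Finset.sum_congr rfl fun j _ => congrArg f (Fin.ext (by simp [he2 j]))

/-- bottom-padded vector -/
def padB {a : ℕ} (p b : ℕ) (v : Fin a → ℂ) : Fin b → ℂ :=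
  fun j => if (j : ℕ) < p then 0 else
    (if h2 : (j : ℕ) - p < a then v ⟨(j : ℕ) - p, h2⟩ else 0)

lemma padB_lo {a p b : ℕ} (v : Fin a → ℂ) (j : Fin b) (h : (j : ℕ) < p) :
    padB p b v j = 0 := by
  unfold padB
  rw [if_pos h]

lemma padB_hi {a p b : ℕ} (v : Fin a → ℂ) (j : Fin b) (h : ¬ (j : ℕ) < p)
    (h2 : (j : ℕ) - p < a) : padB p b v j = v ⟨(j : ℕ) - p, h2⟩ := by
  unfold padB
  rw [if_neg h, dif_pos h2]

end Stmt9Aux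

lemma padRow_lo {a b : ℕ} (v : Fin a → ℂ) (j : Fin b) (h : (j : ℕ) < a) :
    padRow b v j = v ⟨(j : ℕ), h⟩ := by
  unfold padRow
  rw [dif_pos h]

lemma padRow_hi {a b : ℕ} (v : Fin a → ℂ) (j : Fin b) (h : ¬ (j : ℕ) < a) :
    padRow b v j = 0 := by
  unfold padRow
  rw [dif_neg h]

section DiagBlockEntries

lemma diagBlock_apply_11 {p q a b p' q' : ℕ} (hp : p + a = p') (hq : q + b = q')
    (Z : Matrix (Fin p) (Fin q) ℂ) (W : Matrix (Fin a) (Fin b) ℂ) (i : Fin p) (j : Fin q) :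
    diagBlock hp hq Z W (finCongr hp (Fin.castAdd a i)) (finCongr hq (Fin.castAdd b j))
      = Z i j := by
  simp [diagBlock]

lemma diagBlock_apply_12 {p q a b p' q' : ℕ} (hp : p + a = p') (hq : q + b = q')
    (Z : Matrix (Fin p) (Fin q) ℂ) (W : Matrix (Fin a) (Fin b) ℂ) (i : Fin p) (j : Fin b) :
    diagBlock hp hq Z W (finCongr hp (Fin.castAdd a i)) (finCongr hq (Fin.natAdd q j))
      = 0 := by
  simp [diagBlock]

lemma diagBlock_apply_21 {p q a b p' q' : ℕ} (hp : p + a = p') (hq : q + b = q')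
    (Z : Matrix (Fin p) (Fin q) ℂ) (W : Matrix (Fin a) (Fin b) ℂ) (i : Fin a) (j : Fin q) :
    diagBlock hp hq Z W (finCongr hp (Fin.natAdd p i)) (finCongr hq (Fin.castAdd b j))
      = 0 := by
  simp [diagBlock]

lemma diagBlock_apply_22 {p q a b p' q' : ℕ} (hp : p + a = p') (hq : q + b = q')
    (Z : Matrix (Fin p) (Fin q) ℂ) (W : Matrix (Fin a) (Fin b) ℂ) (i : Fin a) (j : Fin b) :
    diagBlock hp hq Z W (finCongr hp (Fin.natAdd p i)) (finCongr hq (Fin.natAdd q j))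
      = W i j := by
  simp [diagBlock]

end DiagBlockEntries


open Stmt9Aux in
/-- If a proper holomorphic map `F : D^I_{q,p} → D^I_{q',p'}` (with `p' > p ≥ 2`,
`q' > q ≥ 2`) satisfies `(A,0)·F(Z) = (AZ,0)` for every row vector `A` and every `Z`,
then `F(Z) = [[Z,0],[0,F₂₂(Z)]]` for a holomorphic `F₂₂ : D^I_{q,p} → D^I_{q'-q,p'-p}`. -/
theorem stmt_9 (p q p' q' : ℕ) (h2p : 2 ≤ p) (h2q : 2 ≤ q) (hpp : p < p') (hqq : q < q')
    (F : Matrix (Fin q) (Fin p) ℂ → Matrix (Fin q') (Fin p') ℂ)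
    (hF : DifferentiableOn ℂ F (typeIDomain q p))
    (hFp : ProperOn F (typeIDomain q p) (typeIDomain q' p'))
    (hmod : ∀ (A : Fin q → ℂ), ∀ Z ∈ typeIDomain q p,
      (padRow q' A) ᵥ* (F Z) = padRow p' (A ᵥ* Z)) :
    ∃ F22 : Matrix (Fin q) (Fin p) ℂ → Matrix (Fin (q' - q)) (Fin (p' - p)) ℂ,
      DifferentiableOn ℂ F22 (typeIDomain q p) ∧
      Set.MapsTo F22 (typeIDomain q p) (typeIDomain (q' - q) (p' - p)) ∧
      ∀ Z ∈ typeIDomain q p,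
        F Z = diagBlock (Nat.add_sub_cancel' hqq.le) (Nat.add_sub_cancel' hpp.le) Z (F22 Z) := by
  classical
  have hq0 : 0 < q := by omega
  have hq' : q + (q' - q) = q' := Nat.add_sub_cancel' hqq.le
  have hp' : p + (p' - p) = p' := Nat.add_sub_cancel' hpp.le
  -- index embeddings
  set ru : Fin q → Fin q' := fun i => ⟨i.1, i.2.trans hqq⟩ with hru
  set rdn : Fin (q' - q) → Fin q' := fun a => ⟨q + a.1, by have := a.2; omega⟩ with hrdn
  set cu : Fin p → Fin p' := fun j => ⟨j.1, j.2.trans hpp⟩ with hcu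
  set cdn : Fin (p' - p) → Fin p' := fun b => ⟨p + b.1, by have := b.2; omega⟩ with hcdn
  have hruc : ∀ i : Fin q, ((ru i) : ℕ) = i.1 := fun _ => rfl
  have hrdc : ∀ a : Fin (q' - q), ((rdn a) : ℕ) = q + a.1 := fun _ => rfl
  have hcuc : ∀ j : Fin p, ((cu j) : ℕ) = j.1 := fun _ => rfl
  have hcdc : ∀ b : Fin (p' - p), ((cdn b) : ℕ) = p + b.1 := fun _ => rfl
  -- the rows of F Z indexed below q
  have hrow : ∀ Z ∈ typeIDomain q p, ∀ (i : Fin q) (j : Fin p'),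
      F Z (ru i) j = if h : (j : ℕ) < p then Z i ⟨j.1, h⟩ else 0 := by
    intro Z hZ i j
    have h := congrFun (hmod (Pi.single i 1) Z hZ) j
    have hL : (padRow q' (Pi.single i 1) ᵥ* F Z) j = F Z (ru i) j := by
      show ∑ b, padRow q' (Pi.single i 1) b * F Z b j = _
      rw [Finset.sum_eq_single (ru i)]
      · rw [padRow_lo _ _ (show ((ru i) : ℕ) < q from i.2)]
        have h2 : (⟨((ru i) : ℕ), i.2⟩ : Fin q) = i := Fin.ext rfl
        rw [h2, Pi.single_eq_same, one_mul]
      · intro b _ hb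
        by_cases hbq : (b : ℕ) < q
        · rw [padRow_lo _ _ hbq]
          have hne : (⟨(b : ℕ), hbq⟩ : Fin q) ≠ i := by
            intro hcon
            have hval : (b : ℕ) = (i : ℕ) := congrArg Fin.val hcon
            exact hb (Fin.ext hval)
          rw [Pi.single_eq_of_ne hne, zero_mul]
        · rw [padRow_hi _ _ hbq, zero_mul]
      · intro hni
        exact absurd (Finset.mem_univ _) hni
    have hR : padRow p' (Pi.single i 1 ᵥ* Z) j
        = if h : (j : ℕ) < p then Z i ⟨j.1, h⟩ else 0 := by
      by_cases hj : (j : ℕ) < p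
      · rw [padRow_lo _ _ hj, dif_pos hj]
        show ∑ b, (Pi.single i (1:ℂ) : Fin q → ℂ) b * Z b ⟨j.1, hj⟩ = Z i ⟨j.1, hj⟩
        rw [Finset.sum_eq_single i]
        · rw [Pi.single_eq_same, one_mul]
        · intro b _ hb
          rw [Pi.single_eq_of_ne hb, zero_mul]
        · intro hni
          exact absurd (Finset.mem_univ _) hni
      · rw [padRow_hi _ _ hj, dif_neg hj]
    rw [← hL, h, hR]
  -- the lower-left and lower-right blocks
  set Cf : Matrix (Fin q) (Fin p) ℂ → Matrix (Fin (q' - q)) (Fin p) ℂ :=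
    fun Z => Matrix.of fun a b => F Z (rdn a) (cu b) with hCf
  set F22 : Matrix (Fin q) (Fin p) ℂ → Matrix (Fin (q' - q)) (Fin (p' - p)) ℂ :=
    fun Z => Matrix.of fun a b => F Z (rdn a) (cdn b) with hF22
  have hbound : ∀ Z ∈ typeIDomain q p, ∀ x : Fin p → ℂ,
      sqn (Cf Z *ᵥ x) ≤ sqn x - sqn (Z *ᵥ x) := by
    intro Z hZ x
    by_cases hx : x = 0
    · subst hx
      simp [sqn, mulVec_zero]
    · set xt : Fin p' → ℂ := padRow p' x with hxt
      have hxtlo : ∀ j : Fin p, xt (cu j) = x j := by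
        intro j
        rw [hxt, padRow_lo x (cu j) j.2]
      have hxthi : ∀ j : Fin (p' - p), xt (cdn j) = 0 := by
        intro j
        rw [hxt]
        exact padRow_hi x (cdn j) (by rw [hcdc]; omega)
      have hxtne : xt ≠ 0 := by
        obtain ⟨i0, hi0⟩ := Function.ne_iff.mp hx
        intro hcon
        apply hi0
        rw [← hxtlo i0, hcon]
        rfl
      have hFZ := hFp.1 hZ
      have hlt := (mem_typeIDomain_iff (F Z)).mp hFZ xt hxtne
      have hxteq : sqn xt = sqn x := by
        unfold sqn
        rw [sum_split' hp' cu cdn hcuc hcdc (fun j => Complex.normSq (xt j))]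
        simp [hxtlo, hxthi]
      have hmv : ∀ i' : Fin q', (F Z *ᵥ xt) i' = ∑ j : Fin p, F Z i' (cu j) * x j := by
        intro i'
        show ∑ j, F Z i' j * xt j = _
        rw [sum_split' hp' cu cdn hcuc hcdc (fun j => F Z i' j * xt j)]
        simp [hxtlo, hxthi]
      have hup : ∀ i : Fin q, (F Z *ᵥ xt) (ru i) = (Z *ᵥ x) i := by
        intro i
        rw [hmv]
        show _ = ∑ j, Z i j * x j
        apply Finset.sum_congr rfl
        intro j _
        rw [hrow Z hZ i (cu j), dif_pos (show ((cu j) : ℕ) < p from j.2)]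
      have hdown : ∀ a : Fin (q' - q), (F Z *ᵥ xt) (rdn a) = (Cf Z *ᵥ x) a := by
        intro a
        rw [hmv]
        rfl
      have hsplit : sqn (F Z *ᵥ xt) = sqn (Z *ᵥ x) + sqn (Cf Z *ᵥ x) := by
        unfold sqn
        rw [sum_split' hq' ru rdn hruc hrdc (fun i' => Complex.normSq ((F Z *ᵥ xt) i'))]
        congr 1
        · exact Finset.sum_congr rfl fun i _ => by rw [hup i]
        · exact Finset.sum_congr rfl fun a _ => by rw [hdown a]
      rw [hxteq, hsplit] at hlt
      linarith
  have hCdiff : DifferentiableOn ℂ Cf (typeIDomain q p) :=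
    diffOn_of_entries fun a b => diffOn_entry hF (rdn a) (cu b)
  have hF22diff : DifferentiableOn ℂ F22 (typeIDomain q p) :=
    diffOn_of_entries fun a b => diffOn_entry hF (rdn a) (cdn b)
  have hC0 : ∀ Z ∈ typeIDomain q p, Cf Z = 0 := fun Z hZ => core hq0 hCdiff hbound hZ
  refine ⟨F22, hF22diff, ?_, ?_⟩
  · -- MapsTo
    intro Z hZ
    rw [mem_typeIDomain_iff]
    intro y hy
    set yt : Fin p' → ℂ := padB p p' y with hyt
    have hytlo : ∀ j : Fin p, yt (cu j) = 0 := by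
      intro j
      rw [hyt]
      exact padB_lo y (cu j) j.2
    have hythi : ∀ j : Fin (p' - p), yt (cdn j) = y j := by
      intro j
      rw [hyt, padB_hi y (cdn j) (by rw [hcdc]; omega) (by rw [hcdc]; have := j.2; omega)]
      refine congrArg y (Fin.ext ?_)
      show ((cdn j : Fin p') : ℕ) - p = (j : ℕ)
      have h3 := hcdc j
      omega
    have hytne : yt ≠ 0 := by
      obtain ⟨a0, ha0⟩ := Function.ne_iff.mp hy
      intro hcon
      apply ha0
      rw [← hythi a0, hcon]
      rfl
    have hFZ := hFp.1 hZ
    have hlt := (mem_typeIDomain_iff (F Z)).mp hFZ yt hytne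
    have hyteq : sqn yt = sqn y := by
      unfold sqn
      rw [sum_split' hp' cu cdn hcuc hcdc (fun j => Complex.normSq (yt j))]
      simp [hytlo, hythi]
    have hmv : ∀ i' : Fin q', (F Z *ᵥ yt) i' = ∑ j : Fin (p' - p), F Z i' (cdn j) * y j := by
      intro i'
      show ∑ j, F Z i' j * yt j = _
      rw [sum_split' hp' cu cdn hcuc hcdc (fun j => F Z i' j * yt j)]
      simp [hytlo, hythi]
    have hup : ∀ i : Fin q, (F Z *ᵥ yt) (ru i) = 0 := by
      intro i
      rw [hmv]
      apply Finset.sum_eq_zero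
      intro j _
      rw [hrow Z hZ i (cdn j), dif_neg (show ¬ ((cdn j) : ℕ) < p by rw [hcdc]; omega),
        zero_mul]
    have hdown : ∀ a : Fin (q' - q), (F Z *ᵥ yt) (rdn a) = (F22 Z *ᵥ y) a := by
      intro a
      rw [hmv]
      rfl
    have hsplit : sqn (F Z *ᵥ yt) = sqn (F22 Z *ᵥ y) := by
      unfold sqn
      rw [sum_split' hq' ru rdn hruc hrdc (fun i' => Complex.normSq ((F Z *ᵥ yt) i'))]
      have e1 : (∑ i : Fin q, Complex.normSq ((F Z *ᵥ yt) (ru i))) = 0 := by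
        apply Finset.sum_eq_zero
        intro i _
        rw [hup i]
        simp
      rw [e1, zero_add]
      exact Finset.sum_congr rfl fun a _ => by rw [hdown a]
    rw [hyteq, hsplit] at hlt
    exact hlt
  · -- block identity
    intro Z hZ
    ext i j
    by_cases hi : (i : ℕ) < q
    · have hieq : i = finCongr hq' (Fin.castAdd (q' - q) ⟨i.1, hi⟩) := by
        apply Fin.ext
        simp
      by_cases hj : (j : ℕ) < p
      · have hjeq : j = finCongr hp' (Fin.castAdd (p' - p) ⟨j.1, hj⟩) := by
          apply Fin.ext
          simp
        have hlhs : F Z i j = Z ⟨i.1, hi⟩ ⟨j.1, hj⟩ := by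
          conv_lhs => rw [show i = ru ⟨i.1, hi⟩ from Fin.ext rfl]
          rw [hrow Z hZ _ j, dif_pos hj]
        rw [hlhs]
        conv_rhs => rw [hieq, hjeq]
        rw [diagBlock_apply_11]
      · have hjeq : j = finCongr hp' (Fin.natAdd p ⟨j.1 - p, by have := j.2; omega⟩) := by
          apply Fin.ext
          show (j : ℕ) = p + ((j : ℕ) - p)
          omega
        have hlhs : F Z i j = 0 := by
          conv_lhs => rw [show i = ru ⟨i.1, hi⟩ from Fin.ext rfl]
          rw [hrow Z hZ _ j, dif_neg hj]
        rw [hlhs]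
        conv_rhs => rw [hieq, hjeq]
        rw [diagBlock_apply_12]
    · have hieq : i = finCongr hq' (Fin.natAdd q ⟨i.1 - q, by have := i.2; omega⟩) := by
        apply Fin.ext
        show (i : ℕ) = q + ((i : ℕ) - q)
        omega
      have hidx : rdn ⟨i.1 - q, by have := i.2; omega⟩ = i := by
        apply Fin.ext
        show q + ((i : ℕ) - q) = (i : ℕ)
        omega
      by_cases hj : (j : ℕ) < p
      · have hjeq : j = finCongr hp' (Fin.castAdd (p' - p) ⟨j.1, hj⟩) := by
          apply Fin.ext
          simp
        have hjdx : cu ⟨j.1, hj⟩ = j := Fin.ext rfl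
        have hlhs : F Z i j = 0 := by
          have h1 := congrFun (congrFun (hC0 Z hZ) ⟨i.1 - q, by have := i.2; omega⟩) ⟨j.1, hj⟩
          simp only [hCf, Matrix.of_apply, Matrix.zero_apply] at h1
          rw [hidx, hjdx] at h1
          exact h1
        rw [hlhs]
        conv_rhs => rw [hieq, hjeq]
        rw [diagBlock_apply_21]
      · have hjeq : j = finCongr hp' (Fin.natAdd p ⟨j.1 - p, by have := j.2; omega⟩) := by
          apply Fin.ext
          show (j : ℕ) = p + ((j : ℕ) - p)
          omega
        have hjdx : cdn ⟨j.1 - p, by have := j.2; omega⟩ = j := by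
          apply Fin.ext
          show p + ((j : ℕ) - p) = (j : ℕ)
          omega
        conv_rhs => rw [hieq, hjeq]
        rw [diagBlock_apply_22]
        simp only [hF22, Matrix.of_apply]
        rw [hidx, hjdx]
end

section
/- Let q, p, q', p' be positive integers with q ≥ 2 and q' ≥ 2. Let U ⊆ Ω_{q,p} be an open subset and let g = (g₁,g₂) : U → Ω_{q',p'} be a holomorphic map (g₁ with values in M(1,q';ℂ), g₂ in M(1,p';ℂ)) that is fibral-image-preserving: for every Z ∈ D^I_{q,p} with S_Z := {(A,B) ∈ U : A·Z = B} nonempty, there exists W ∈ D^I_{q',p'} such that g₁(A,B)·W = g₂(A,B) for all (A,B) ∈ S_Z. Suppose there exists Z₀ ∈ D^I_{q,p} with S_{Z₀} ≠ ∅ for which such W is unique, i.e. exactly one W₀ ∈ D^I_{q',p'} satisfies g₁(A,B)·W₀ = g₂(A,B) for all (A,B) ∈ S_{Z₀}. Then there exist an open neighborhood U_{Z₀} of Z₀ in D^I_{q,p} and a holomorphic map F : U_{Z₀} → D^I_{q',p'} such that for every Z ∈ U_{Z₀}, F(Z) is the unique element W of D^I_{q',p'} satisfying g₁(A,B)·W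 = g₂(A,B) for all (A,B) ∈ S_Z. -/
open Matrix
open scoped ComplexOrder

attribute [local instance] Matrix.normedAddCommGroup Matrix.normedSpace

/-- The affine cone over the generalized ball `D_{r,s} ⊂ ℙ^{r+s-1}`:
pairs of row vectors `(A,B)` with `‖A‖ > ‖B‖`. -/
def genBallCone (r s : ℕ) : Set ((Fin r → ℂ) × (Fin s → ℂ)) :=
  {x | ∑ j, ‖x.2 j‖ ^ 2 < ∑ i, ‖x.1 i‖ ^ 2}

lemma herm_dp_real {n : ℕ} {M : Matrix (Fin n) (Fin n) ℂ} (hM : M.IsHermitian)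
    (x : Fin n → ℂ) : (star x ⬝ᵥ M *ᵥ x).im = 0 := by
  have h : star (star x ⬝ᵥ M *ᵥ x) = star x ⬝ᵥ M *ᵥ x := by
    calc star (star x ⬝ᵥ M *ᵥ x) = star (M *ᵥ x) ⬝ᵥ x := by
          rw [← star_dotProduct_star, star_star]
      _ = (star x ᵥ* Mᴴ) ⬝ᵥ x := by rw [star_mulVec]
      _ = star x ⬝ᵥ M *ᵥ x := by rw [hM.eq, ← dotProduct_mulVec]
  exact Complex.conj_eq_iff_im.mp h

lemma posDef_of_re {n : ℕ} {M : Matrix (Fin n) (Fin n) ℂ} (hH : M.IsHermitian)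
    (h : ∀ x : Fin n → ℂ, x ≠ 0 → 0 < (star x ⬝ᵥ M *ᵥ x).re) : M.PosDef := by
  refine PosDef.of_dotProduct_mulVec_pos hH fun x hx => ?_
  rw [Complex.lt_def]
  exact ⟨by simpa using h x hx, by simpa using (herm_dp_real hH x).symm⟩

lemma qf_norm_bound {n : ℕ} (E : Matrix (Fin n) (Fin n) ℂ) (x : Fin n → ℂ) :
    ‖star x ⬝ᵥ E *ᵥ x‖ ≤ (n : ℝ)^2 * ‖E‖ * ‖x‖^2 := by
  calc ‖star x ⬝ᵥ E *ᵥ x‖ = ‖∑ i, ∑ j, star (x i) * (E i j * x j)‖ := by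
        simp only [dotProduct, mulVec, Pi.star_apply, Finset.mul_sum]
    _ ≤ ∑ i, ∑ j, ‖star (x i) * (E i j * x j)‖ :=
        (norm_sum_le _ _).trans (Finset.sum_le_sum fun i _ => norm_sum_le _ _)
    _ ≤ ∑ _i : Fin n, ∑ _j : Fin n, ‖x‖ * (‖E‖ * ‖x‖) := by
        refine Finset.sum_le_sum fun i _ => Finset.sum_le_sum fun j _ => ?_
        rw [norm_mul, norm_mul, norm_star]
        have h1 : ‖x i‖ ≤ ‖x‖ := norm_le_pi_norm x i
        have h2 : ‖E i j‖ ≤ ‖E‖ := E.norm_entry_le_entrywise_sup_norm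
        have h3 : ‖x j‖ ≤ ‖x‖ := norm_le_pi_norm x j
        exact mul_le_mul h1 (mul_le_mul h2 h3 (norm_nonneg _) (norm_nonneg _))
          (by positivity) (norm_nonneg _)
    _ = (n : ℝ)^2 * ‖E‖ * ‖x‖^2 := by
        simp [Finset.sum_const]; ring

lemma qf_smul {n : ℕ} (M : Matrix (Fin n) (Fin n) ℂ) (a : ℂ) (x : Fin n → ℂ) :
    star (a • x) ⬝ᵥ M *ᵥ (a • x) = (star a * a) * (star x ⬝ᵥ M *ᵥ x) := by
  rw [star_smul, M.mulVec_smul, smul_dotProduct, dotProduct_smul, smul_eq_mul, smul_eq_mul]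
  ring

lemma posdef_nbhd {n : ℕ} {M0 : Matrix (Fin n) (Fin n) ℂ} (h : M0.PosDef) :
    ∃ δ > 0, ∀ M : Matrix (Fin n) (Fin n) ℂ, M.IsHermitian → ‖M - M0‖ < δ → M.PosDef := by
  rcases Nat.eq_zero_or_pos n with hn | hn
  · subst hn
    exact ⟨1, one_pos, fun M hM _ => ⟨hM, fun x hx => absurd (Subsingleton.elim x 0) hx⟩⟩
  have : Nonempty (Fin n) := Fin.pos_iff_nonempty.mp hn
  have hc : Continuous fun x : Fin n → ℂ => (star x ⬝ᵥ M0 *ᵥ x).re := by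
    apply Complex.continuous_re.comp
    simp only [dotProduct, mulVec, Pi.star_apply]
    exact continuous_finset_sum _ fun i _ =>
      (continuous_star.comp (continuous_apply i)).mul
        (continuous_finset_sum _ fun j _ => continuous_const.mul (continuous_apply j))
  have hx0 : (fun _ => 1 : Fin n → ℂ) ∈ Metric.sphere (0 : Fin n → ℂ) 1 := by
    simp [mem_sphere_iff_norm, pi_norm_const]
  obtain ⟨z, hz, hmin⟩ := (isCompact_sphere (0 : Fin n → ℂ) 1).exists_isMinOn
    ⟨_, hx0⟩ hc.continuousOn
  have hz1 : ‖z‖ = 1 := by simpa [mem_sphere_iff_norm] using hz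
  have hzne : z ≠ 0 := by intro h0; rw [h0] at hz1; simp at hz1
  set c : ℝ := (star z ⬝ᵥ M0 *ᵥ z).re with hcdef
  have hcpos : 0 < c := h.re_dotProduct_pos hzne
  have hlow : ∀ x : Fin n → ℂ, x ≠ 0 → c * ‖x‖^2 ≤ (star x ⬝ᵥ M0 *ᵥ x).re := by
    intro x hx
    have hnx : (0:ℝ) < ‖x‖ := norm_pos_iff.mpr hx
    set u : Fin n → ℂ := (‖x‖⁻¹ : ℂ) • x with hu
    have hus : u ∈ Metric.sphere (0 : Fin n → ℂ) 1 := by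
      simp [hu, mem_sphere_iff_norm, norm_smul, inv_mul_cancel₀ hnx.ne']
    have hmin' : c ≤ (star u ⬝ᵥ M0 *ᵥ u).re := hmin hus
    have hq : (star u ⬝ᵥ M0 *ᵥ u) = (((‖x‖:ℂ))^2)⁻¹ * (star x ⬝ᵥ M0 *ᵥ x) := by
      rw [hu, qf_smul]
      rw [show star ((‖x‖:ℂ)⁻¹) = ((‖x‖:ℂ))⁻¹ by
        rw [star_inv₀, RCLike.star_def, Complex.conj_ofReal]]
      ring
    have hre : (star u ⬝ᵥ M0 *ᵥ u).re = (‖x‖^2)⁻¹ * (star x ⬝ᵥ M0 *ᵥ x).re := by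
      rw [hq, show (((‖x‖:ℂ))^2)⁻¹ = (((‖x‖^2 : ℝ) : ℂ))⁻¹ by push_cast; ring,
        ← Complex.ofReal_inv, Complex.re_ofReal_mul]
    rw [hre] at hmin'
    have h2 : (0:ℝ) < ‖x‖^2 := by positivity
    calc c * ‖x‖^2 ≤ ((‖x‖^2)⁻¹ * (star x ⬝ᵥ M0 *ᵥ x).re) * ‖x‖^2 := by gcongr
      _ = (star x ⬝ᵥ M0 *ᵥ x).re := by field_simp
  refine ⟨c / ((n : ℝ)^2 + 1), by positivity, fun M hM hdist => ?_⟩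
  apply posDef_of_re hM
  intro x hx
  have hnx : (0:ℝ) < ‖x‖ := norm_pos_iff.mpr hx
  have hsplit : star x ⬝ᵥ M *ᵥ x = star x ⬝ᵥ M0 *ᵥ x + star x ⬝ᵥ (M - M0) *ᵥ x := by
    rw [sub_mulVec, dotProduct_sub]; ring
  have habs : |(star x ⬝ᵥ (M - M0) *ᵥ x).re| ≤ (n : ℝ)^2 * ‖M - M0‖ * ‖x‖^2 :=
    (Complex.abs_re_le_norm _).trans (qf_norm_bound _ _)
  have hlt : (n : ℝ)^2 * ‖M - M0‖ * ‖x‖^2 < c * ‖x‖^2 := by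
    have h1 : (n : ℝ)^2 * ‖M - M0‖ < c := by
      calc (n : ℝ)^2 * ‖M - M0‖ ≤ ((n : ℝ)^2 + 1) * ‖M - M0‖ := by
            have := norm_nonneg (M - M0); nlinarith
        _ < ((n : ℝ)^2 + 1) * (c / ((n : ℝ)^2 + 1)) := by
            exact (mul_lt_mul_iff_right₀ (by positivity)).mpr hdist
        _ = c := by field_simp
    have h2 : (0:ℝ) < ‖x‖^2 := by positivity
    nlinarith
  have hlow' := hlow x hx
  rw [hsplit, Complex.add_re]
  have habs' := abs_le.mp habs
  nlinarith [habs'.1, habs'.2]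

lemma isOpen_typeIDomain (m n : ℕ) : IsOpen (typeIDomain m n) := by
  refine Metric.isOpen_iff.mpr ?_
  intro Z0 hZ0
  obtain ⟨δ, hδ, hball⟩ := posdef_nbhd hZ0
  have hφ : Continuous fun Z : Matrix (Fin m) (Fin n) ℂ =>
      (1 : Matrix (Fin n) (Fin n) ℂ) - Zᴴ * Z :=
    continuous_const.sub ((continuous_id.matrix_conjTranspose).matrix_mul continuous_id)
  have hca := hφ.continuousAt (x := Z0)
  replace hca := Metric.continuousAt_iff.mp hca
  obtain ⟨ρ, hρ, hcont⟩ := hca δ hδ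
  refine ⟨ρ, hρ, fun Z hZ => ?_⟩
  have hd := hcont hZ
  rw [dist_eq_norm] at hd
  exact hball _ (Matrix.isHermitian_one.sub (Matrix.isHermitian_conjTranspose_mul_self Z))
    (by simpa using hd)

section DiffDet
variable {X : Type*} [NormedAddCommGroup X] [NormedSpace ℂ X] {s : Set X}

lemma diffOn_finset_prod {ι : Type*} (t : Finset ι) (f : ι → X → ℂ)
    (h : ∀ i ∈ t, DifferentiableOn ℂ (f i) s) :
    DifferentiableOn ℂ (fun x => ∏ i ∈ t, f i x) s := by
  classical
  induction t using Finset.induction with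
  | empty => simpa using differentiableOn_const (1 : ℂ)
  | @insert i t hnot ih =>
    simp only [Finset.prod_insert hnot]
    exact (h i (Finset.mem_insert_self i t)).mul
      (ih fun j hj => h j (Finset.mem_insert_of_mem hj))

lemma diffOn_det {k : ℕ} {M : X → Matrix (Fin k) (Fin k) ℂ}
    (h : ∀ i j, DifferentiableOn ℂ (fun x => M x i j) s) :
    DifferentiableOn ℂ (fun x => (M x).det) s := by
  simp only [Matrix.det_apply']
  refine DifferentiableOn.fun_sum fun σ _ => ?_
  exact (differentiableOn_const _).mul
    (diffOn_finset_prod _ _ fun i _ => h (σ i) i)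

lemma diffOn_adjugate {k : ℕ} {M : X → Matrix (Fin k) (Fin k) ℂ}
    (h : ∀ i j, DifferentiableOn ℂ (fun x => M x i j) s) (i j : Fin k) :
    DifferentiableOn ℂ (fun x => (M x).adjugate i j) s := by
  simp only [Matrix.adjugate_apply]
  apply diffOn_det
  intro i' j'
  simp only [Matrix.updateRow_apply]
  by_cases hij : i' = j
  · simp [hij]
  · simpa [hij] using h i' j'

end DiffDet


/-- A holomorphic fibral-image-preserving map `g = (g₁,g₂)` defined on an open subset
`U` of the cone over `D_{q,p}`, with a point `Z₀` whose fibral image is sent into a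
unique fibral image, admits a holomorphic local moduli map `F` near `Z₀`: `F Z` is the
unique `W ∈ D^I_{q',p'}` with `g₁(A,B)·W = g₂(A,B)` for all `(A,B) ∈ U` with `A·Z = B`. -/
theorem stmt_14 (q p q' p' : ℕ) (h0p : 0 < p) (h0p' : 0 < p') (h2q : 2 ≤ q) (h2q' : 2 ≤ q')
    (U : Set ((Fin q → ℂ) × (Fin p → ℂ))) (hUopen : IsOpen U) (hUsub : U ⊆ genBallCone q p)
    (g1 : (Fin q → ℂ) × (Fin p → ℂ) → (Fin q' → ℂ))
    (g2 : (Fin q → ℂ) × (Fin p → ℂ) → (Fin p' → ℂ))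
    (hg1 : DifferentiableOn ℂ g1 U) (hg2 : DifferentiableOn ℂ g2 U)
    (hgm : ∀ x ∈ U, (g1 x, g2 x) ∈ genBallCone q' p')
    (hfip : ∀ Z ∈ typeIDomain q p, (∃ x ∈ U, x.1 ᵥ* Z = x.2) →
      ∃ W ∈ typeIDomain q' p', ∀ x ∈ U, x.1 ᵥ* Z = x.2 → (g1 x) ᵥ* W = g2 x)
    (Z0 : Matrix (Fin q) (Fin p) ℂ) (hZ0 : Z0 ∈ typeIDomain q p)
    (hZ0ne : ∃ x ∈ U, x.1 ᵥ* Z0 = x.2)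
    (huniq : ∃! W, W ∈ typeIDomain q' p' ∧
      ∀ x ∈ U, x.1 ᵥ* Z0 = x.2 → (g1 x) ᵥ* W = g2 x) :
    ∃ V : Set (Matrix (Fin q) (Fin p) ℂ), IsOpen V ∧ Z0 ∈ V ∧ V ⊆ typeIDomain q p ∧
      ∃ F : Matrix (Fin q) (Fin p) ℂ → Matrix (Fin q') (Fin p') ℂ,
        DifferentiableOn ℂ F V ∧
        ∀ Z ∈ V, F Z ∈ typeIDomain q' p' ∧
          (∀ x ∈ U, x.1 ᵥ* Z = x.2 → (g1 x) ᵥ* (F Z) = g2 x) ∧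
          ∀ W ∈ typeIDomain q' p',
            (∀ x ∈ U, x.1 ᵥ* Z = x.2 → (g1 x) ᵥ* W = g2 x) → W = F Z := by
  classical
  obtain ⟨W0, ⟨hW0D, hW0eq⟩, hW0u⟩ := huniq
  set S : Set ((Fin q → ℂ) × (Fin p → ℂ)) := {x | x ∈ U ∧ x.1 ᵥ* Z0 = x.2} with hSdef
  -- Step II: the span of g1 '' S is everything
  have hspan : Submodule.span ℂ (g1 '' S) = ⊤ := by
    by_contra hne
    obtain ⟨f, hf0, hfbot⟩ :=
      (Submodule.span ℂ (g1 '' S)).exists_dual_map_eq_bot_of_lt_top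
        (lt_top_iff_ne_top.mpr hne) inferInstance
    set v : Fin q' → ℂ := fun i => f (Pi.single i 1) with hv
    have hfv : ∀ u : Fin q' → ℂ, f u = u ⬝ᵥ v := by
      intro u
      have hu : u = ∑ i, u i • (Pi.single i 1 : Fin q' → ℂ) := by
        funext j
        simp [Pi.single_apply, Finset.sum_apply]
      calc f u = f (∑ i, u i • (Pi.single i 1 : Fin q' → ℂ)) := by rw [← hu]
        _ = ∑ i, u i * f (Pi.single i 1) := by
            rw [map_sum]; simp [_root_.map_smul, smul_eq_mul]
        _ = u ⬝ᵥ v := rfl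
    have hvne : v ≠ 0 := by
      intro h0
      exact hf0 (LinearMap.ext fun u => by rw [hfv, h0]; simp)
    have hvan : ∀ x ∈ S, g1 x ⬝ᵥ v = 0 := by
      intro x hx
      have hmem : g1 x ∈ Submodule.span ℂ (g1 '' S) := Submodule.subset_span ⟨x, hx, rfl⟩
      have h2 : f (g1 x) ∈ (Submodule.span ℂ (g1 '' S)).map f :=
        Submodule.mem_map_of_mem hmem
      rw [hfbot] at h2
      rw [← hfv]
      simpa using h2
    set j0 : Fin p' := ⟨0, h0p'⟩
    set C : Matrix (Fin q') (Fin p') ℂ := Matrix.of fun i j => if j = j0 then v i else 0 with hC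
    have hCmul : ∀ x ∈ S, g1 x ᵥ* C = 0 := by
      intro x hx
      funext j
      simp only [Matrix.vecMul, dotProduct, hC, Matrix.of_apply, Pi.zero_apply]
      by_cases hj : j = j0
      · subst hj
        simpa [dotProduct] using hvan x hx
      · simp [hj]
    obtain ⟨i0, hi0⟩ : ∃ i0, v i0 ≠ 0 := Function.ne_iff.mp hvne
    have hCne : C ≠ 0 := by
      intro h0
      exact hi0 (by simpa [hC] using congrFun (congrFun h0 i0) j0)
    obtain ⟨ε, hε, hball⟩ := Metric.isOpen_iff.mp (isOpen_typeIDomain q' p') W0 hW0D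
    set t : ℝ := ε / (2 * (‖C‖ + 1)) with ht
    have htpos : 0 < t := by positivity
    have hWt : W0 + (t:ℂ) • C ∈ typeIDomain q' p' := by
      apply hball
      rw [Metric.mem_ball, dist_eq_norm, add_sub_cancel_left, norm_smul]
      have h1 : ‖(t:ℂ)‖ = t := by
        rw [Complex.norm_real, Real.norm_of_nonneg htpos.le]
      rw [h1, ht]
      have hC1 : ‖C‖ < ‖C‖ + 1 := by linarith
      calc ε / (2 * (‖C‖ + 1)) * ‖C‖ < ε / (2 * (‖C‖ + 1)) * (‖C‖ + 1) := by
            apply mul_lt_mul_of_pos_left hC1; positivity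
        _ = ε / 2 := by field_simp
        _ < ε := by linarith
    have hWteq : ∀ x ∈ U, x.1 ᵥ* Z0 = x.2 → g1 x ᵥ* (W0 + (t:ℂ) • C) = g2 x := by
      intro x hxU hxZ
      rw [Matrix.vecMul_add]
      have hsm : g1 x ᵥ* ((t:ℂ) • C) = (t:ℂ) • (g1 x ᵥ* C) := by
        funext j
        simp [Matrix.vecMul, dotProduct, Finset.mul_sum]
        ring_nf
        apply Finset.sum_congr rfl
        intro i _
        ring
      rw [hsm, hCmul x ⟨hxU, hxZ⟩, smul_zero, add_zero]
      exact hW0eq x hxU hxZ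
    have hcontra := hW0u _ ⟨hWt, hWteq⟩
    have : (t:ℂ) • C = 0 := by
      have := add_eq_left.mp hcontra
      exact this
    rcases smul_eq_zero.mp this with h | h
    · exact absurd (by exact_mod_cast h) htpos.ne'
    · exact hCne h
  
  -- Step III: build the local moduli map
  obtain ⟨s, hs_sub, hs_span, hs_li⟩ := exists_linearIndependent ℂ (g1 '' S)
  rw [hspan] at hs_span
  have hsfin : s.Finite := hs_li.setFinite
  have : Fintype s := hsfin.fintype
  let b : Module.Basis s ℂ (Fin q' → ℂ) := Module.Basis.mk hs_li (by rw [Subtype.range_coe, hs_span])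
  have hcard : Fintype.card s = q' := by
    have h1 := Module.finrank_eq_card_basis b
    rw [Module.finrank_fin_fun] at h1
    omega
  let e : Fin q' ≃ s := (Fintype.equivFinOfCardEq hcard).symm
  let r : Fin q' → (Fin q' → ℂ) := fun i => ((e i : s) : Fin q' → ℂ)
  have hr_li : LinearIndependent ℂ r := hs_li.comp e e.injective
  have hr_mem : ∀ i, r i ∈ g1 '' S := fun i => hs_sub (e i).2
  choose a haS hag using hr_mem
  let y : Matrix (Fin q) (Fin p) ℂ → Fin q' → ((Fin q → ℂ) × (Fin p → ℂ)) :=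
    fun Z i => ((a i).1, (a i).1 ᵥ* Z)
  let G1 : Matrix (Fin q) (Fin p) ℂ → Matrix (Fin q') (Fin q') ℂ :=
    fun Z => Matrix.of fun i => g1 (y Z i)
  let G2 : Matrix (Fin q) (Fin p) ℂ → Matrix (Fin q') (Fin p') ℂ :=
    fun Z => Matrix.of fun i => g2 (y Z i)
  let Fm : Matrix (Fin q) (Fin p) ℂ → Matrix (Fin q') (Fin p') ℂ :=
    fun Z => ((G1 Z).det)⁻¹ • ((G1 Z).adjugate * G2 Z)
  have hyZ0 : ∀ i, y Z0 i = a i := fun i => Prod.ext rfl ((haS i).2)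
  have hG1Z0 : G1 Z0 = Matrix.of r := by
    ext i j
    simp only [G1, Matrix.of_apply, hyZ0, hag]
  have hdet0 : (G1 Z0).det ≠ 0 := by
    have hu : IsUnit (G1 Z0) := by
      rw [hG1Z0]
      exact Matrix.linearIndependent_rows_iff_isUnit.mp hr_li
    exact ((Matrix.isUnit_iff_isUnit_det _).mp hu).ne_zero
  -- differentiability of the building blocks
  have hcoord : ∀ (k : Fin q) (j : Fin p),
      Differentiable ℂ (fun Z : Matrix (Fin q) (Fin p) ℂ => Z k j) := by
    intro k j
    exact ((ContinuousLinearMap.proj (R := ℂ) (φ := fun _ : Fin p => ℂ) j).comp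
      (ContinuousLinearMap.proj (R := ℂ) (φ := fun _ : Fin q => (Fin p → ℂ)) k)).differentiable
  have hvm : ∀ i, Differentiable ℂ (fun Z : Matrix (Fin q) (Fin p) ℂ => (a i).1 ᵥ* Z) := by
    intro i
    refine differentiable_pi.mpr ?_
    intro j
    simp only [Matrix.vecMul, dotProduct]
    exact Differentiable.fun_sum fun k _ => (differentiable_const _).mul (hcoord k j)
  have hyd : ∀ i, Differentiable ℂ (fun Z => y Z i) :=
    fun i => (differentiable_const _).prodMk (hvm i)
  let O : Set (Matrix (Fin q) (Fin p) ℂ) := {Z | ∀ i, y Z i ∈ U}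
  have hOopen : IsOpen O := by
    have hOeq : O = ⋂ i, (fun Z => y Z i) ⁻¹' U := by
      ext Z; simp [O, Set.mem_iInter]
    rw [hOeq]
    exact isOpen_iInter_of_finite fun i => hUopen.preimage (hyd i).continuous
  have hG1c : ContinuousOn G1 O := by
    refine continuousOn_pi.mpr ?_
    intro i
    rw [continuousOn_pi]
    intro j
    exact (continuous_apply j).comp_continuousOn
      (hg1.continuousOn.comp (hyd i).continuous.continuousOn fun Z hZ => hZ i)
  have hdetc : ContinuousOn (fun Z => (G1 Z).det) O :=
    (continuous_id.matrix_det).comp_continuousOn hG1c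
  set V : Set (Matrix (Fin q) (Fin p) ℂ) :=
    typeIDomain q p ∩ (O ∩ (fun Z => (G1 Z).det) ⁻¹' ({(0:ℂ)}ᶜ)) with hVdef
  have hVopen : IsOpen V :=
    (isOpen_typeIDomain q p).inter
      (hdetc.isOpen_inter_preimage hOopen isOpen_compl_singleton)
  have hZ0V : Z0 ∈ V := by
    refine ⟨hZ0, fun i => ?_, ?_⟩
    · rw [hyZ0 i]; exact (haS i).1
    · simpa using hdet0
  have hG1e : ∀ i j, DifferentiableOn ℂ (fun Z => G1 Z i j) V := by
    intro i j
    have h1 : DifferentiableOn ℂ (fun Z => g1 (y Z i)) V :=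
      hg1.comp (hyd i).differentiableOn fun Z hZ => hZ.2.1 i
    exact differentiableOn_pi.mp h1 j
  have hG2e : ∀ i j, DifferentiableOn ℂ (fun Z => G2 Z i j) V := by
    intro i j
    have h1 : DifferentiableOn ℂ (fun Z => g2 (y Z i)) V :=
      hg2.comp (hyd i).differentiableOn fun Z hZ => hZ.2.1 i
    exact differentiableOn_pi.mp h1 j
  have hdetd : DifferentiableOn ℂ (fun Z => (G1 Z).det) V := diffOn_det hG1e
  have hinvd : DifferentiableOn ℂ (fun Z => ((G1 Z).det)⁻¹) V :=
    hdetd.inv fun Z hZ => hZ.2.2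
  have hFd : DifferentiableOn ℂ Fm V := by
    refine differentiableOn_pi.mpr ?_
    intro i
    rw [differentiableOn_pi]
    intro j
    have heq : (fun Z => Fm Z i j) =
        fun Z => ((G1 Z).det)⁻¹ * (∑ k, (G1 Z).adjugate i k * G2 Z k j) := by
      funext Z
      simp [Fm, Matrix.mul_apply, Matrix.smul_apply, smul_eq_mul]
    rw [heq]
    exact hinvd.mul (DifferentiableOn.fun_sum fun k _ =>
      (diffOn_adjugate hG1e i k).mul (hG2e k j))
  refine ⟨V, hVopen, hZ0V, Set.inter_subset_left, Fm, hFd, ?_⟩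
  intro Z hZV
  have hy_mem : ∀ i, y Z i ∈ U := hZV.2.1
  have hdet : (G1 Z).det ≠ 0 := hZV.2.2
  have key : ∀ W' : Matrix (Fin q') (Fin p') ℂ,
      (∀ x ∈ U, x.1 ᵥ* Z = x.2 → g1 x ᵥ* W' = g2 x) → W' = Fm Z := by
    intro W' hW'
    have hmul : G1 Z * W' = G2 Z := by
      ext i j
      have h1 := hW' (y Z i) (hy_mem i) rfl
      have h2 := congrFun h1 j
      simpa [Matrix.mul_apply, Matrix.vecMul, dotProduct, G1, G2] using h2
    calc W' = ((G1 Z).det)⁻¹ • ((G1 Z).adjugate * (G1 Z * W')) := by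
          rw [← Matrix.mul_assoc, Matrix.adjugate_mul, Matrix.smul_mul, Matrix.one_mul,
            smul_smul, inv_mul_cancel₀ hdet, one_smul]
      _ = Fm Z := by rw [hmul]
  obtain ⟨W, hWD, hWeq⟩ := hfip Z hZV.1 ⟨y Z ⟨0, by omega⟩, hy_mem _, rfl⟩
  have hFW : Fm Z = W := (key W hWeq).symm
  refine ⟨hFW ▸ hWD, fun x hxU hxZ => ?_, fun W' hW'D hW'eq => key W' hW'eq⟩
  rw [hFW]
  exact hWeq x hxU hxZ
end
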